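/- For α₁, α₂ > 0, β₁, β₂ > 0 with α₁/α₂ < 1, and y₁, y₂ > 0: ∫_0^∞ x^{β₁+β₂-2} exp(-y₁ x^{α₁} - y₂ x^{α₂}) dx = α₂^{-1} y₂^{-(β₁+β₂-1)/α₂} 𝕃_{α₁/α₂, (β₁+β₂-1)/α₂}(y₁ y₂^{-α₁/α₂}), provided β₁+β₂ > 1. -/

import Mathlib

open MeasureTheory Real Set

private lemma real_exp_hasSum (x : ℝ) :
    HasSum (fun n : ℕ => x ^ n / n.factorial) (Real.exp x) := by
  rw [Real.exp_eq_exp_ℝ]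
  exact NormedSpace.expSeries_div_hasSum_exp x

private lemma aux_integrable {p q b : ℝ} (hp : 0 < p) (hq : -1 < q) (hb : 0 < b) :
    IntegrableOn (fun x : ℝ => x ^ q * Real.exp (-b * x ^ p)) (Ioi 0) := by
  set s : ℝ := (q + 1) / p with hs
  have hps : p * s = q + 1 := by rw [hs]; field_simp
  have hs0 : 0 < s := div_pos (by linarith) hp
  have h1 : IntegrableOn (fun y : ℝ => Real.exp (-(b * y)) * (b * y) ^ (s - 1)) (Ioi 0) := by
    have h := integrableOn_Ioi_comp_mul_left_iff
      (fun t : ℝ => Real.exp (-t) * t ^ (s - 1)) 0 hb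
    rw [mul_zero] at h
    exact h.mpr (Real.GammaIntegral_convergent hs0)
  have h2 : IntegrableOn (fun y : ℝ => y ^ (s - 1) * Real.exp (-(b * y))) (Ioi 0) := by
    have h3 := h1.const_mul (b ^ (1 - s) : ℝ)
    refine (IntegrableOn.congr_fun h3 (fun y hy => ?_) measurableSet_Ioi)
    have hy0 : (0:ℝ) < y := hy
    rw [Real.mul_rpow hb.le hy0.le, mul_comm (Real.exp _), ← mul_assoc, ← mul_assoc,
      ← Real.rpow_add hb]
    norm_num
  have h4 := (integrableOn_Ioi_comp_rpow_iff'
    (fun y : ℝ => y ^ (s - 1) * Real.exp (-(b * y))) hp.ne').2 h2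
  refine IntegrableOn.congr_fun h4 (fun x hx => ?_) measurableSet_Ioi
  have hx0 : (0:ℝ) < x := hx
  simp only [smul_eq_mul]
  rw [← Real.rpow_mul hx0.le, ← mul_assoc, ← Real.rpow_add hx0, neg_mul]
  congr 2
  linear_combination hps

/-- `t^θ ≤ C + y₂ t` Young-type bound. -/
private lemma young_bound {θ y₁ y₂ : ℝ} (hθ0 : 0 < θ) (hθ1 : θ < 1)
    (hy₁ : 0 < y₁) (hy₂ : 0 < y₂) :
    ∃ C : ℝ, ∀ t : ℝ, 0 ≤ t → y₁ * t ^ θ ≤ C + y₂ * t := by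
  set c : ℝ := (y₂ / y₁) ^ (1 / (1 - θ)) with hc
  have hc0 : 0 < c := Real.rpow_pos_of_pos (div_pos hy₂ hy₁) _
  have hc1 : c ^ (1 - θ) = y₂ / y₁ := by
    rw [hc, ← Real.rpow_mul (div_pos hy₂ hy₁).le, one_div_mul_cancel (by linarith), Real.rpow_one]
  refine ⟨y₁ * c ^ (-θ), fun t ht => ?_⟩
  have key : (c * t) ^ θ ≤ 1 + c * t := by
    rcases le_or_gt (c * t) 1 with h | h
    · have := Real.rpow_le_one (by positivity) h hθ0.le
      nlinarith [mul_nonneg hc0.le ht]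
    · calc (c * t) ^ θ ≤ (c * t) ^ (1:ℝ) :=
            Real.rpow_le_rpow_of_exponent_le h.le hθ1.le
        _ = c * t := Real.rpow_one _
        _ ≤ 1 + c * t := by linarith
  have ht' : t ^ θ = c ^ (-θ) * (c * t) ^ θ := by
    rw [Real.mul_rpow hc0.le ht, ← mul_assoc, ← Real.rpow_add hc0, neg_add_cancel,
      Real.rpow_zero, one_mul]
  have hcc : c ^ (-θ) * c = c ^ (1 - θ) := by
    nth_rewrite 2 [← Real.rpow_one c]
    rw [← Real.rpow_add hc0]
    ring_nf
  have hpos : 0 < c ^ (-θ) := Real.rpow_pos_of_pos hc0 _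
  calc y₁ * t ^ θ = y₁ * (c ^ (-θ) * (c * t) ^ θ) := by rw [ht']
    _ ≤ y₁ * (c ^ (-θ) * (1 + c * t)) := by
        refine mul_le_mul_of_nonneg_left ?_ hy₁.le
        exact mul_le_mul_of_nonneg_left key hpos.le
    _ = y₁ * c ^ (-θ) + y₁ * (c ^ (-θ) * c) * t := by ring
    _ = y₁ * c ^ (-θ) + y₂ * t := by
        rw [hcc, hc1]
        field_simp

theorem stmt_8 (α₁ α₂ β₁ β₂ y₁ y₂ : ℝ)
    (hα₁ : 0 < α₁) (hα₂ : 0 < α₂) (hαα : α₁ / α₂ < 1)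
    (hβ₁ : 0 < β₁) (hβ₂ : 0 < β₂) (hβ : 1 < β₁ + β₂)
    (hy₁ : 0 < y₁) (hy₂ : 0 < y₂) :
    ∫ x in Set.Ioi (0 : ℝ), x ^ (β₁ + β₂ - 2) * Real.exp (-y₁ * x ^ α₁ - y₂ * x ^ α₂)
      = α₂⁻¹ * y₂ ^ (-((β₁ + β₂ - 1) / α₂)) *
          ∑' n : ℕ, ((-1 : ℝ) ^ n * Real.Gamma ((α₁ / α₂) * n + (β₁ + β₂ - 1) / α₂)
              / (n.factorial : ℝ)) * (y₁ * y₂ ^ (-(α₁ / α₂))) ^ n := by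
  have hθ0 : 0 < α₁ / α₂ := div_pos hα₁ hα₂
  have hbm2 : (-1 : ℝ) < β₁ + β₂ - 2 := by linarith
  obtain ⟨C, hC⟩ := young_bound hθ0 hαα hy₁ (half_pos hy₂)
  -- the summands
  set F : ℕ → ℝ → ℝ := fun n x =>
    ((-y₁ * x ^ α₁) ^ n / n.factorial) * (x ^ (β₁ + β₂ - 2) * Real.exp (-y₂ * x ^ α₂)) with hF
  set bound : ℕ → ℝ → ℝ := fun n x =>
    ((y₁ * |x ^ α₁|) ^ n / n.factorial) * (x ^ (β₁ + β₂ - 2) * Real.exp (-y₂ * x ^ α₂))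
    with hbound
  have hmeas : ∀ n : ℕ, AEStronglyMeasurable (F n) (volume.restrict (Ioi 0)) := by
    intro n
    apply Measurable.aestronglyMeasurable
    fun_prop
  have h_bound : ∀ n : ℕ, ∀ᵐ x ∂(volume.restrict (Ioi (0:ℝ))), ‖F n x‖ ≤ bound n x := by
    intro n
    filter_upwards [ae_restrict_mem measurableSet_Ioi] with x hx
    have hx0 : (0:ℝ) < x := hx
    have h1 : (0:ℝ) ≤ x ^ (β₁ + β₂ - 2) * Real.exp (-y₂ * x ^ α₂) := by positivity
    have heq : ‖F n x‖ = bound n x := by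
      rw [hF, hbound]
      simp only
      rw [Real.norm_eq_abs, abs_mul, abs_div, abs_pow, abs_mul, abs_neg, abs_of_pos hy₁,
        Nat.abs_cast, abs_of_nonneg h1]
    exact heq.le
  have h_sum : ∀ᵐ x ∂(volume.restrict (Ioi (0:ℝ))), Summable fun n => bound n x := by
    refine Filter.Eventually.of_forall fun x => ?_
    exact (Real.summable_pow_div_factorial _).mul_right _
  have h_tsum : ∀ x : ℝ, (∑' n, bound n x)
      = Real.exp (y₁ * |x ^ α₁|) * (x ^ (β₁ + β₂ - 2) * Real.exp (-y₂ * x ^ α₂)) := by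
    intro x
    rw [hbound]
    rw [tsum_mul_right, (real_exp_hasSum (y₁ * |x ^ α₁|)).tsum_eq]
  have h_int : Integrable (fun x => ∑' n, bound n x) (volume.restrict (Ioi (0:ℝ))) := by
    have hmaj : IntegrableOn
        (fun x : ℝ => Real.exp C * (x ^ (β₁ + β₂ - 2) * Real.exp (-(y₂/2) * x ^ α₂)))
        (Ioi 0) := (aux_integrable hα₂ hbm2 (half_pos hy₂)).const_mul _
    refine Integrable.mono' hmaj ?_ ?_
    · apply Measurable.aestronglyMeasurable
      simp only [funext h_tsum]
      fun_prop
    · filter_upwards [ae_restrict_mem measurableSet_Ioi] with x hx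
      have hx0 : (0:ℝ) < x := hx
      rw [h_tsum]
      have habs : |x ^ α₁| = x ^ α₁ := abs_of_nonneg (Real.rpow_nonneg hx0.le _)
      have hxa : x ^ α₁ = (x ^ α₂) ^ (α₁ / α₂) := by
        rw [← Real.rpow_mul hx0.le, mul_div_cancel₀ _ hα₂.ne']
      have hkey : y₁ * x ^ α₁ ≤ C + (y₂/2) * x ^ α₂ := by
        rw [hxa]; exact hC _ (Real.rpow_nonneg hx0.le _)
      have hnn : (0:ℝ) ≤ Real.exp (y₁ * |x ^ α₁|) *
          (x ^ (β₁ + β₂ - 2) * Real.exp (-y₂ * x ^ α₂)) := by positivity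
      rw [Real.norm_eq_abs, abs_of_nonneg hnn, habs]
      have : Real.exp (y₁ * x ^ α₁) * Real.exp (-y₂ * x ^ α₂)
          ≤ Real.exp C * Real.exp (-(y₂/2) * x ^ α₂) := by
        rw [← Real.exp_add, ← Real.exp_add]
        apply Real.exp_le_exp.mpr
        linarith
      calc Real.exp (y₁ * x ^ α₁) * (x ^ (β₁ + β₂ - 2) * Real.exp (-y₂ * x ^ α₂))
          = x ^ (β₁ + β₂ - 2) * (Real.exp (y₁ * x ^ α₁) * Real.exp (-y₂ * x ^ α₂)) := by ring
        _ ≤ x ^ (β₁ + β₂ - 2) * (Real.exp C * Real.exp (-(y₂/2) * x ^ α₂)) := by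
            exact mul_le_mul_of_nonneg_left this (Real.rpow_nonneg hx0.le _)
        _ = Real.exp C * (x ^ (β₁ + β₂ - 2) * Real.exp (-(y₂/2) * x ^ α₂)) := by ring
  have h_lim : ∀ᵐ x ∂(volume.restrict (Ioi (0:ℝ))),
      HasSum (fun n => F n x)
        (x ^ (β₁ + β₂ - 2) * Real.exp (-y₁ * x ^ α₁ - y₂ * x ^ α₂)) := by
    refine Filter.Eventually.of_forall fun x => ?_
    have h := (real_exp_hasSum (-y₁ * x ^ α₁)).mul_right
      (x ^ (β₁ + β₂ - 2) * Real.exp (-y₂ * x ^ α₂))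
    convert h using 1
    · rfl
    rw [show -y₁ * x ^ α₁ - y₂ * x ^ α₂ = (-y₁ * x ^ α₁) + (-y₂ * x ^ α₂) by ring,
      Real.exp_add]
    ring
  have key : HasSum (fun n => ∫ x in Ioi (0:ℝ), F n x)
      (∫ x in Ioi (0:ℝ), x ^ (β₁ + β₂ - 2) * Real.exp (-y₁ * x ^ α₁ - y₂ * x ^ α₂)) :=
    hasSum_integral_of_dominated_convergence bound hmeas h_bound h_sum h_int h_lim
  rw [← key.tsum_eq, mul_assoc, ← tsum_mul_left, ← tsum_mul_left]
  refine tsum_congr fun n => ?_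
  have hn0 : (0:ℝ) ≤ α₁ * n := by positivity
  have hq' : (-1:ℝ) < α₁ * n + (β₁ + β₂ - 2) := by linarith
  have step1 : ∫ x in Ioi (0:ℝ), F n x
      = ((-y₁) ^ n / n.factorial) *
          ∫ x in Ioi (0:ℝ), x ^ (α₁ * n + (β₁ + β₂ - 2)) * Real.exp (-y₂ * x ^ α₂) := by
    rw [← integral_const_mul]
    refine setIntegral_congr_fun measurableSet_Ioi fun x hx => ?_
    have hx0 : (0:ℝ) < x := hx
    rw [hF]
    simp only
    rw [mul_pow, ← Real.rpow_natCast (x ^ α₁) n, ← Real.rpow_mul hx0.le,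
      Real.rpow_add hx0]
    ring
  rw [step1, integral_rpow_mul_exp_neg_mul_rpow hα₂ hq' hy₂]
  have hGamma : (α₁ * n + (β₁ + β₂ - 2) + 1) / α₂ = (α₁ / α₂) * n + (β₁ + β₂ - 1) / α₂ := by
    field_simp
    ring
  have hpow : (y₁ * y₂ ^ (-(α₁ / α₂))) ^ n = y₁ ^ n * y₂ ^ (-(α₁ / α₂) * n) := by
    rw [mul_pow, ← Real.rpow_natCast (y₂ ^ (-(α₁/α₂))) n, ← Real.rpow_mul hy₂.le]
  have hy₂pow : y₂ ^ (-((β₁ + β₂ - 1) / α₂)) * y₂ ^ (-(α₁ / α₂) * n)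
      = y₂ ^ (-(α₁ * n + (β₁ + β₂ - 2) + 1) / α₂) := by
    rw [← Real.rpow_add hy₂]
    congr 1
    field_simp
    ring
  have hneg : (-y₁ : ℝ) ^ n = (-1) ^ n * y₁ ^ n := by
    rw [neg_eq_neg_one_mul, mul_pow]
  rw [hGamma, hpow, hneg, ← hy₂pow]
  ring
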